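/- Consider a big-vs-small tournament on N = 2^n players with big set B of size 2^{n−1} and big-beats-small probability p ∈ [0,1] (entries between two big or between two small players arbitrary). For any draw σ, the probability that some big player wins equals B_p applied to the {0,1} leaf labeling induced by σ, i.e. Σ_{i ∈ B} wp(i,P,σ) = B_p(t_σ), where t_σ labels a leaf 1 if the player placed there belongs to B and 0 otherwise. -/

import Mathlib

/-- A perfect (balanced) binary tree of depth `n` with leaves labelled by `α`. -/
inductive BT (α : Type) : ℕ → Type
  | leaf : α → BT α 0
  | node {n : ℕ} : BT α n → BT α n → BT α (n + 1)

namespace BT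

/-- The list of leaf labels, from left to right. -/
def leaves {α : Type} : ∀ {n : ℕ}, BT α n → List α
  | _, .leaf a => [a]
  | _, .node L R => L.leaves ++ R.leaves

/-- Relabel the leaves of a tree. -/
def map {α β : Type} (f : α → β) : ∀ {n : ℕ}, BT α n → BT β n
  | _, .leaf a => .leaf (f a)
  | _, .node L R => .node (L.map f) (R.map f)

end BT

/-- Two trees represent the same draw iff one can be obtained from the other by
swapping the two children subtrees at internal nodes. -/
def BTequiv {α : Type} : ∀ {n : ℕ}, BT α n → BT α n → Prop
  | 0, .leaf a, .leaf b => a = b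
  | _ + 1, .node L R, .node L' R' =>
      (BTequiv L L' ∧ BTequiv R R') ∨ (BTequiv L R' ∧ BTequiv R L')

/-- A draw: each of the `N` players occurs exactly once among the leaves. -/
def IsDraw {N n : ℕ} (t : BT (Fin N) n) : Prop :=
  ∀ i : Fin N, t.leaves.count i = 1

/-- The winning distribution of a knockout tournament: `wd P t i` is the probability
that player `i` wins the (sub)tournament with draw `t` and comparison matrix `P`. -/
noncomputable def wd {N : ℕ} (P : Fin N → Fin N → ℝ) :
    ∀ {n : ℕ}, BT (Fin N) n → Fin N → ℝ
  | _, .leaf j => fun i => if i = j then 1 else 0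
  | _, .node L R => fun i =>
      wd P L i * (∑ j, wd P R j * P i j) + wd P R i * (∑ j, wd P L j * P i j)

/-- `P` is a comparison matrix. -/
def IsCompMatrix {N : ℕ} (P : Fin N → Fin N → ℝ) : Prop :=
  ∀ i j : Fin N, i ≠ j → 0 ≤ P i j ∧ P i j ≤ 1 ∧ P i j + P j i = 1

/-- `P` is deterministic: every off-diagonal entry is 0 or 1. -/
def IsDet {N : ℕ} (P : Fin N → Fin N → ℝ) : Prop :=
  ∀ i j : Fin N, i ≠ j → P i j = 0 ∨ P i j = 1

/-- The set `𝒫(P,ε)` of ε-perturbations of `P`. -/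
def perturbs {N : ℕ} (P : Fin N → Fin N → ℝ) (ε : ℝ) : Set (Fin N → Fin N → ℝ) :=
  {P' | IsCompMatrix P' ∧ ∀ i j : Fin N, i ≠ j → |P' i j - P i j| ≤ ε}

/-- The ε-guaranteed winning probability `wp_ε(i,P,σ)`. -/
noncomputable def wpe {N n : ℕ} (i : Fin N) (P : Fin N → Fin N → ℝ) (ε : ℝ)
    (t : BT (Fin N) n) : ℝ :=
  sInf ((fun P' => wd P' t i) '' perturbs P ε)

/-- The comparison matrix of the hard `n`-round tournament `H_n` (players 0-indexed):
for `i < j`, player `i` beats player `j` iff `i = j - 2 ^ v` where `2 ^ v` is the largest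
power of 2 dividing `j` (in 0-indexed numbering). -/
noncomputable def hardP (n : ℕ) : Fin (2 ^ n) → Fin (2 ^ n) → ℝ := fun i j =>
  if i = j then 0
  else if (i : ℕ) < (j : ℕ) then
    (if (i : ℕ) + 2 ^ padicValNat 2 (j : ℕ) = (j : ℕ) then 1 else 0)
  else
    (if (j : ℕ) + 2 ^ padicValNat 2 (i : ℕ) = (i : ℕ) then 0 else 1)

/-- The tree of depth `n` whose leaves are `s, s+1, …, s + 2^n - 1` from left to right. -/
def ordTree : (n : ℕ) → ℕ → BT ℕ n
  | 0, s => .leaf s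
  | n + 1, s => .node (ordTree n s) (ordTree n (s + 2 ^ n))

/-- The identity draw, placing players `0, 1, …, 2^n - 1` on the leaves in order. -/
def idDraw (n : ℕ) : BT (Fin (2 ^ n)) n :=
  (ordTree n 0).map (fun k => ⟨k % 2 ^ n, Nat.mod_lt _ (by positivity)⟩)

/-- `f_p(x,y) = p(x+y) + (1-2p)xy`. -/
def fp (p x y : ℝ) : ℝ := p * (x + y) + (1 - 2 * p) * x * y

/-- `B_p` on trees with real leaf labels. -/
noncomputable def Bp (p : ℝ) : ∀ {n : ℕ}, BT ℝ n → ℝ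
  | _, .leaf x => x
  | _, .node L R => fp p (Bp p L) (Bp p R)

/-- Group a list into consecutive pairs. -/
def pairList {α : Type} : List α → List (α × α)
  | a :: b :: rest => (a, b) :: pairList rest
  | _ => []

/-- The first-round matches of a draw: the consecutive sibling pairs of leaves. -/
def firstPairs {α : Type} {n : ℕ} (t : BT α n) : List (α × α) := pairList t.leaves

/-- A draw is mixed (w.r.t. the set `B` of big players) if every first-round match
pairs a big player with a small player. -/
def MixedDraw {N n : ℕ} (B : Finset (Fin N)) (t : BT (Fin N) n) : Prop :=
  ∀ q ∈ firstPairs t, ((q.1 ∈ B) ↔ q.2 ∉ B)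

/-- Number of leaves labelled `1`. -/
noncomputable def ones {n : ℕ} (t : BT ℝ n) : ℕ := t.leaves.count 1

/-- All leaf labels are `0` or `1`. -/
def ZeroOne {n : ℕ} (t : BT ℝ n) : Prop := ∀ x ∈ t.leaves, x = 0 ∨ x = 1

/-- `P[kl←t]`: the matrix agreeing with `P` except `P k l = t` and `P l k = 1 - t`. -/
def updPair {N : ℕ} (P : Fin N → Fin N → ℝ) (k l : Fin N) (t : ℝ) :
    Fin N → Fin N → ℝ :=
  fun i j => if i = k ∧ j = l then t else if i = l ∧ j = k then 1 - t else P i j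

/-- Perturb a deterministic matrix: for each pair `(w, l) ∈ S` (winner first),
set `P w l = 1 - ε` and `P l w = ε`; other entries unchanged. -/
def detPerturb {N : ℕ} (P : Fin N → Fin N → ℝ) (S : Finset (Fin N × Fin N)) (ε : ℝ) :
    Fin N → Fin N → ℝ :=
  fun i j => if (i, j) ∈ S then 1 - ε else if (j, i) ∈ S then ε else P i j

/-- Swap the result of the single match between `a` and `b`. -/
def swapPair {N : ℕ} (P : Fin N → Fin N → ℝ) (a b : Fin N) : Fin N → Fin N → ℝ :=
  fun i j => if i = a ∧ j = b then P b a else if i = b ∧ j = a then P a b else P i j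

/-- The pair `(a,b)` (with `a` the winner) is crucial for `i` in `C(P,σ)`. -/
def Crucial {N n : ℕ} (P : Fin N → Fin N → ℝ) (σ : BT (Fin N) n) (i : Fin N)
    (a b : Fin N) : Prop :=
  a ≠ b ∧ P a b = 1 ∧ wd (swapPair P a b) σ i = 0

private lemma wd_notmem {N : ℕ} (P : Fin N → Fin N → ℝ) :
    ∀ {m : ℕ} (t : BT (Fin N) m) (i : Fin N), i ∉ t.leaves → wd P t i = 0 := by
  intro m t
  induction t with
  | leaf j => intro i h; simp [BT.leaves] at h; simp [wd, h]
  | node L R ihL ihR =>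
      intro i h
      simp [BT.leaves] at h
      simp [wd, ihL i h.1, ihR i h.2]

private lemma wd_key {N : ℕ} (P : Fin N → Fin N → ℝ) (hP : IsCompMatrix P)
    (p : ℝ) (B : Finset (Fin N))
    (hbs : ∀ b ∈ B, ∀ s, s ∉ B → P b s = p) :
    ∀ {m : ℕ} (t : BT (Fin N) m), t.leaves.Nodup →
      (∑ i, wd P t i = 1) ∧
      (∑ i ∈ B, wd P t i = Bp p (t.map fun i => if i ∈ B then (1 : ℝ) else 0)) := by
  intro m t
  induction t with
  | leaf j =>
      intro _
      constructor
      · simp [wd]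
      · simp [wd, BT.map, Bp, Finset.sum_ite_eq']
  | node L R ihL ihR =>
      intro hnd
      rw [show (BT.node L R).leaves = L.leaves ++ R.leaves from rfl,
        List.nodup_append] at hnd
      obtain ⟨hLnd, hRnd, hdisj⟩ := hnd
      obtain ⟨hL1, hLB⟩ := ihL hLnd
      obtain ⟨hR1, hRB⟩ := ihR hRnd
      have hkey : ∀ i j : Fin N,
          wd P L i * wd P R j * (P i j + P j i) = wd P L i * wd P R j := by
        intro i j
        by_cases hi : i ∈ L.leaves
        · by_cases hj : j ∈ R.leaves
          · have hij : i ≠ j := by rintro rfl; exact hdisj _ hi _ hj rfl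
            rw [(hP i j hij).2.2]; ring
          · rw [wd_notmem P R j hj]; ring
        · rw [wd_notmem P L i hi]; ring
      have prod2 : ∀ (s u : Finset (Fin N)) (f g : Fin N → ℝ),
          ∑ i ∈ s, ∑ j ∈ u, f i * g j = (∑ i ∈ s, f i) * (∑ j ∈ u, g j) := by
        intro s u f g
        rw [Finset.sum_mul_sum]
      have cross : ∀ s : Finset (Fin N),
          ∑ i ∈ s, ∑ j ∈ s,
            (wd P L i * (wd P R j * P i j) + wd P R i * (wd P L j * P i j))
          = (∑ i ∈ s, wd P L i) * (∑ j ∈ s, wd P R j) := by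
        intro s
        have h1 : ∑ i ∈ s, ∑ j ∈ s, wd P R i * (wd P L j * P i j)
            = ∑ i ∈ s, ∑ j ∈ s, wd P R j * (wd P L i * P j i) := Finset.sum_comm
        calc ∑ i ∈ s, ∑ j ∈ s,
              (wd P L i * (wd P R j * P i j) + wd P R i * (wd P L j * P i j))
            = ∑ i ∈ s, ∑ j ∈ s, wd P L i * (wd P R j * P i j)
              + ∑ i ∈ s, ∑ j ∈ s, wd P R i * (wd P L j * P i j) := by
              simp [Finset.sum_add_distrib]
          _ = ∑ i ∈ s, ∑ j ∈ s,
              (wd P L i * (wd P R j * P i j) + wd P R j * (wd P L i * P j i)) := by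
              rw [h1]; simp [Finset.sum_add_distrib]
          _ = ∑ i ∈ s, ∑ j ∈ s, wd P L i * wd P R j := by
              refine Finset.sum_congr rfl fun i _ => Finset.sum_congr rfl fun j _ => ?_
              linear_combination hkey i j
          _ = (∑ i ∈ s, wd P L i) * (∑ j ∈ s, wd P R j) := prod2 s s _ _
      have hnode : ∀ s : Finset (Fin N),
          ∑ i ∈ s, wd P (BT.node L R) i
          = ∑ i ∈ s, ∑ j : Fin N,
              (wd P L i * (wd P R j * P i j) + wd P R i * (wd P L j * P i j)) := by
        intro s
        refine Finset.sum_congr rfl fun i _ => ?_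
        show wd P L i * (∑ j, wd P R j * P i j) + wd P R i * (∑ j, wd P L j * P i j) = _
        rw [Finset.mul_sum, Finset.mul_sum, ← Finset.sum_add_distrib]
      constructor
      · rw [hnode, cross Finset.univ, hL1, hR1]; norm_num
      · -- split inner sum over B and Bᶜ
        have hcL : ∑ j ∈ Bᶜ, wd P L j = 1 - ∑ j ∈ B, wd P L j := by
          have := Finset.sum_add_sum_compl B (wd P L)
          linarith [this.trans hL1]
        have hcR : ∑ j ∈ Bᶜ, wd P R j = 1 - ∑ j ∈ B, wd P R j := by
          have := Finset.sum_add_sum_compl B (wd P R)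
          linarith [this.trans hR1]
        have hsplit : ∑ i ∈ B, wd P (BT.node L R) i
            = ∑ i ∈ B, ∑ j ∈ B,
                (wd P L i * (wd P R j * P i j) + wd P R i * (wd P L j * P i j))
              + ∑ i ∈ B, ∑ j ∈ Bᶜ,
                (wd P L i * (wd P R j * P i j) + wd P R i * (wd P L j * P i j)) := by
          rw [hnode, ← Finset.sum_add_distrib]
          refine Finset.sum_congr rfl fun i _ => ?_
          exact (Finset.sum_add_sum_compl B _).symm
        have hmix : ∑ i ∈ B, ∑ j ∈ Bᶜ,
              (wd P L i * (wd P R j * P i j) + wd P R i * (wd P L j * P i j))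
            = p * ((∑ i ∈ B, wd P L i) * (∑ j ∈ Bᶜ, wd P R j))
              + p * ((∑ i ∈ B, wd P R i) * (∑ j ∈ Bᶜ, wd P L j)) := by
          calc ∑ i ∈ B, ∑ j ∈ Bᶜ,
                (wd P L i * (wd P R j * P i j) + wd P R i * (wd P L j * P i j))
              = ∑ i ∈ B, ∑ j ∈ Bᶜ,
                ((p * wd P L i) * wd P R j + (p * wd P R i) * wd P L j) := by
                refine Finset.sum_congr rfl fun i hi => Finset.sum_congr rfl fun j hj => ?_
                rw [hbs i hi j (Finset.mem_compl.mp hj)]; ring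
            _ = ∑ i ∈ B, ∑ j ∈ Bᶜ, (p * wd P L i) * wd P R j
                + ∑ i ∈ B, ∑ j ∈ Bᶜ, (p * wd P R i) * wd P L j := by
                simp [Finset.sum_add_distrib]
            _ = (∑ i ∈ B, p * wd P L i) * (∑ j ∈ Bᶜ, wd P R j)
                + (∑ i ∈ B, p * wd P R i) * (∑ j ∈ Bᶜ, wd P L j) := by
                rw [prod2 B Bᶜ (fun i => p * wd P L i) (wd P R),
                  prod2 B Bᶜ (fun i => p * wd P R i) (wd P L)]
            _ = _ := by rw [← Finset.mul_sum, ← Finset.mul_sum]; ring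
        have hBpnode : Bp p ((BT.node L R).map fun i => if i ∈ B then (1 : ℝ) else 0)
            = fp p (Bp p (L.map fun i => if i ∈ B then (1 : ℝ) else 0))
                   (Bp p (R.map fun i => if i ∈ B then (1 : ℝ) else 0)) := rfl
        rw [hsplit, cross B, hmix, hcL, hcR, hBpnode, ← hLB, ← hRB, fp]
        ring

/-- in a big-vs-small tournament, the probability that a big player
wins equals `B_p` applied to the induced `{0,1}` leaf labeling of the draw. -/
theorem big_win_prob_eq_Bp (n : ℕ) (hn : 1 ≤ n)
    (p : ℝ) (hp : p ∈ Set.Icc (0 : ℝ) 1)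
    (B : Finset (Fin (2 ^ n))) (hB : B.card = 2 ^ (n - 1))
    (P : Fin (2 ^ n) → Fin (2 ^ n) → ℝ) (hP : IsCompMatrix P)
    (hbs : ∀ b ∈ B, ∀ s, s ∉ B → P b s = p)
    (σ : BT (Fin (2 ^ n)) n) (hσ : IsDraw σ) :
    (∑ i ∈ B, wd P σ i) =
      Bp p (σ.map (fun i => if i ∈ B then (1 : ℝ) else 0)) := by
  have hnd : σ.leaves.Nodup := by
    rw [List.nodup_iff_count_le_one]
    intro a; exact (hσ a).le
  exact (wd_key P hP p B hbs σ hnd).2
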